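/- Let E be a symplectic vector space of dimension 2n, let A, A' be Lagrangian with dim(A ∩ A') = n − 1, and let F be Lagrangian with dim(F ∩ (A + A')) = 2 and F ∩ A = F ∩ A' of dimension 1. Then B = (A ∩ A') + (F ∩ (A + A')) is the unique Lagrangian subspace in the pencil of Lagrangians containing A ∩ A' that contains F ∩ (A + A'), and dim(F ∩ B) = 2. -/

import Mathlib

open Module

/-- Let `E` be a symplectic vector space of dimension `2n`, `A`, `A'` Lagrangian
with `dim (A ∩ A') = n − 1`, and `F` Lagrangian with `dim (F ∩ (A + A')) = 2`
and `F ∩ A = F ∩ A'` of dimension 1. Then `B = (A ∩ A') + (F ∩ (A + A'))` is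
the unique Lagrangian subspace in the pencil of Lagrangians containing `A ∩ A'`
(the `n`-dimensional subspaces between `A ∩ A'` and `(A ∩ A')^⊥`) that contains
`F ∩ (A + A')`, and `dim (F ∩ B) = 2`. -/
theorem statement7 (E : Type*) [AddCommGroup E] [Module ℂ E] [FiniteDimensional ℂ E]
    (n : ℕ) (hE : finrank ℂ E = 2 * n)
    (ω : LinearMap.BilinForm ℂ E)
    (halt : ∀ x, ω x x = 0)
    (hnd : ∀ x, (∀ y, ω x y = 0) → x = 0)
    (A A' F : Submodule ℂ E)
    (hA : A = ω.orthogonal A) (hA' : A' = ω.orthogonal A') (hF : F = ω.orthogonal F)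
    (hAA' : finrank ℂ (A ⊓ A' : Submodule ℂ E) = n - 1)
    (hFA1 : finrank ℂ (F ⊓ A : Submodule ℂ E) = 1)
    (hFAA' : F ⊓ A = F ⊓ A')
    (hF2 : finrank ℂ (F ⊓ (A ⊔ A') : Submodule ℂ E) = 2)
    (B : Submodule ℂ E) (hBdef : B = (A ⊓ A') ⊔ (F ⊓ (A ⊔ A'))) :
    B = ω.orthogonal B ∧
    A ⊓ A' ≤ B ∧ B ≤ ω.orthogonal (A ⊓ A') ∧ finrank ℂ B = n ∧
    F ⊓ (A ⊔ A') ≤ B ∧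
    finrank ℂ (F ⊓ B : Submodule ℂ E) = 2 ∧
    (∀ C : Submodule ℂ E, A ⊓ A' ≤ C → C ≤ ω.orthogonal (A ⊓ A') →
      finrank ℂ C = n → F ⊓ (A ⊔ A') ≤ C → C = B) := by
  have hrefl : ω.IsRefl := LinearMap.IsAlt.isRefl halt
  have hN : ω.Nondegenerate := (LinearMap.IsRefl.nondegenerate_iff_separatingLeft hrefl).mpr hnd
  -- n ≥ 1
  have hn1 : 1 ≤ n := by
    have h := Submodule.finrank_le (F ⊓ A : Submodule ℂ E)
    rw [hFA1, hE] at h; omega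
  -- dimensions of Lagrangians
  have hdim : ∀ W : Submodule ℂ E, W = ω.orthogonal W → finrank ℂ W = n := by
    intro W hW
    have h := LinearMap.BilinForm.finrank_orthogonal hN W
    rw [← hW, hE] at h
    have h2 : finrank ℂ W ≤ 2 * n := hE ▸ Submodule.finrank_le W
    omega
  have hdA : finrank ℂ A = n := hdim A hA
  have hdA' : finrank ℂ A' = n := hdim A' hA'
  have hdF : finrank ℂ F = n := hdim F hF
  -- dim (A ⊔ A') = n + 1
  have hsup : finrank ℂ (A ⊔ A' : Submodule ℂ E) = n + 1 := by
    have h := Submodule.finrank_sup_add_finrank_inf_eq A A'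
    rw [hAA', hdA, hdA'] at h; omega
  -- key : orthogonal of A ⊓ A' is A ⊔ A'
  have key : ω.orthogonal (A ⊓ A') = A ⊔ A' := by
    have hle : A ⊔ A' ≤ ω.orthogonal (A ⊓ A') := by
      apply sup_le
      · exact hA.trans_le (ω.orthogonal_le inf_le_left)
      · exact hA'.trans_le (ω.orthogonal_le inf_le_right)
    have hd : finrank ℂ (ω.orthogonal (A ⊓ A')) = n + 1 := by
      rw [LinearMap.BilinForm.finrank_orthogonal hN, hE, hAA']; omega
    exact (Submodule.eq_of_le_of_finrank_le hle (by rw [hsup, hd])).symm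
  -- intersection of the two pieces of B
  have hint : (A ⊓ A') ⊓ (F ⊓ (A ⊔ A')) = F ⊓ A := by
    apply le_antisymm
    · exact le_inf (le_trans inf_le_right inf_le_left) (le_trans inf_le_left inf_le_left)
    · intro x hx
      obtain ⟨hxF, hxA⟩ := hx
      have hxA' : x ∈ A' := ((hFAA' ▸ (⟨hxF, hxA⟩ : x ∈ F ⊓ A)) : x ∈ F ⊓ A').2
      exact ⟨⟨hxA, hxA'⟩, hxF, le_sup_left (a := A) hxA⟩
  -- dim B = n
  have hdB : finrank ℂ B = n := by
    have h := Submodule.finrank_sup_add_finrank_inf_eq (A ⊓ A') (F ⊓ (A ⊔ A'))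
    rw [hint, hFA1, hAA', hF2, ← hBdef] at h
    omega
  -- B ≤ A ⊔ A'
  have hBle : B ≤ A ⊔ A' := by
    rw [hBdef]
    exact sup_le (le_trans inf_le_left le_sup_left) inf_le_right
  -- B is isotropic
  have hiso : B ≤ ω.orthogonal B := by
    have hsupo : ω.orthogonal B = ω.orthogonal (A ⊓ A') ⊓ ω.orthogonal (F ⊓ (A ⊔ A')) := by
      rw [hBdef]
      apply le_antisymm
      · exact le_inf (ω.orthogonal_le le_sup_left) (ω.orthogonal_le le_sup_right)
      · rintro x ⟨hx1, hx2⟩ z hz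
        obtain ⟨a, ha, b, hb, rfl⟩ := Submodule.mem_sup.mp hz
        show ω (a + b) x = 0
        rw [map_add, LinearMap.add_apply, (hx1 a ha : ω a x = 0), (hx2 b hb : ω b x = 0),
          add_zero]
    rw [hsupo, key]
    refine le_inf hBle ?_
    rw [hBdef]
    apply sup_le
    · intro x hx u hu
      have hu' : u ∈ ω.orthogonal (A ⊓ A') := key ▸ (hu.2 : u ∈ A ⊔ A')
      exact hrefl x u (hu' x hx)
    · exact le_trans inf_le_left (hF.trans_le (ω.orthogonal_le inf_le_left))
  -- B is Lagrangian
  have hBLag : B = ω.orthogonal B := by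
    apply Submodule.eq_of_le_of_finrank_le hiso
    rw [LinearMap.BilinForm.finrank_orthogonal hN, hE, hdB]; omega
  have h1 : A ⊓ A' ≤ B := by rw [hBdef]; exact le_sup_left
  have h2 : B ≤ ω.orthogonal (A ⊓ A') := by rw [key]; exact hBle
  have h3 : F ⊓ (A ⊔ A') ≤ B := by rw [hBdef]; exact le_sup_right
  refine ⟨hBLag, h1, h2, hdB, h3, ?_, ?_⟩
  · have : F ⊓ B = F ⊓ (A ⊔ A') := by
      apply le_antisymm
      · exact le_inf inf_le_left (le_trans inf_le_right hBle)
      · exact le_inf inf_le_left h3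
    rw [this, hF2]
  · intro C hC1 hC2 hC3 hC4
    have hBC : B ≤ C := by rw [hBdef]; exact sup_le hC1 hC4
    exact (Submodule.eq_of_le_of_finrank_le hBC (by rw [hC3, hdB])).symm
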